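/- Let f₁, …, f_s : ℤ_m → ℤ_m be 1-Lipschitz. Suppose that for all K, d ∈ ℕ, β ∈ {0,…,m^d−1} and every set M ⊆ {0,…,m^K−1}^s, liminf_{n→∞} μ(φₙ ∈ ⋃_{b∈M} ⋃_{c∈O_K(b)} J_K(c) | ξ_d = β) ≥ Σ_{b∈M} m^{−Ks}, where O_K(b) = {c ∈ {0,…,m^K−1}^s : (bᵢ − cᵢ) mod m^K ∈ {0, 1, m^K−1} for all i}. Then the collection f₁, …, f_s is uniform with each suffix. -/

import Mathlib

open MeasureTheory ProbabilityTheory Filter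

/-- The ring `ℤ_m` of `m`-adic integers, modelled as base-`m` digit sequences. -/
abbrev Zm (m : ℕ) := ℕ → Fin m

/-- `ω mod m^n`: the natural number formed by the first `n` base-`m` digits of `ω`. -/
def modPow {m : ℕ} (ω : Zm m) (n : ℕ) : ℕ :=
  ∑ i ∈ Finset.range n, (ω i).val * m ^ i

/-- `f : ℤ_m → ℤ_m` is 1-Lipschitz: the first `n` digits of `f ω` depend only
on the first `n` digits of `ω`. -/
def Lip1 {m : ℕ} (f : Zm m → Zm m) : Prop :=
  ∀ (n : ℕ) (ω₁ ω₂ : Zm m), modPow ω₁ n = modPow ω₂ n → modPow (f ω₁) n = modPow (f ω₂) n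

/-- `μ` is the normalized Haar measure on `ℤ_m`: every ball
`{ω : ω mod m^k = a}` has measure `m^{-k}`. -/
def IsHaar {m : ℕ} (μ : Measure (Zm m)) : Prop :=
  ∀ (k a : ℕ), a < m ^ k → μ {ω | modPow ω k = a} = ((m : ENNReal) ^ k)⁻¹

/-- The vector `φₙ(ω) = ((f₁(ω) mod m^n)/m^n, …, (f_s(ω) mod m^n)/m^n)`. -/
noncomputable def phi {m s : ℕ} (f : Fin s → Zm m → Zm m) (n : ℕ) (ω : Zm m) :
    Fin s → ℝ :=
  fun i => (modPow (f i ω) n : ℝ) / (m : ℝ) ^ n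

/-- The cube `J_k(a) = ∏ᵢ [aᵢ/m^k, (aᵢ+1)/m^k) ⊂ [0,1)^s`. -/
def Jcube (m k : ℕ) {s : ℕ} (a : Fin s → ℕ) : Set (Fin s → ℝ) :=
  {x | ∀ i, (a i : ℝ) / (m : ℝ) ^ k ≤ x i ∧ x i < ((a i : ℝ) + 1) / (m : ℝ) ^ k}

/-- The suffix event `ξ_d = β`, i.e. `ω mod m^d = β`. -/
def suffixEvent (m d β : ℕ) : Set (Zm m) := {ω | modPow ω d = β}

/-- The uniform (Lebesgue) probability distribution on the cube `[0,1)^s`. -/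
noncomputable def unifCube (s : ℕ) : Measure (Fin s → ℝ) :=
  volume.restrict (Set.univ.pi fun _ => Set.Ico (0 : ℝ) 1)

/-- The collection `f₁,…,f_s` generates a uniform distribution: `φₙ` converges
weakly to the uniform distribution on `[0,1)^s`. -/
def GeneratesUniform {m s : ℕ} (μ : Measure (Zm m)) (f : Fin s → Zm m → Zm m) : Prop :=
  ∀ g : BoundedContinuousFunction (Fin s → ℝ) ℝ,
    Tendsto (fun n => ∫ ω, g (phi f n ω) ∂μ) atTop (nhds (∫ x, g x ∂(unifCube s)))

/-- The collection `f₁,…,f_s` is uniform with each suffix: conditionally on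
`ξ_d = β`, the probability that `φₙ` hits any cube `J_k(a)` tends to `m^{-ks}`. -/
def UniformWithSuffix {m s : ℕ} (μ : Measure (Zm m)) (f : Fin s → Zm m → Zm m) : Prop :=
  ∀ (k d : ℕ) (a : Fin s → ℕ), (∀ i, a i < m ^ k) → ∀ β < m ^ d,
    Tendsto
      (fun n => ProbabilityTheory.cond μ (suffixEvent m d β) {ω | phi f n ω ∈ Jcube m k a})
      atTop (nhds (((m : ENNReal) ^ (k * s))⁻¹))

/-- The cyclic `±1` neighborhood `O_K(b)`: collections `c ∈ {0,…,m^K−1}^s`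
with `(bᵢ − cᵢ) mod m^K ∈ {0, 1, m^K − 1}` for all `i`. -/
def neighb (m K : ℕ) {s : ℕ} (b c : Fin s → ℕ) : Prop :=
  (∀ i, c i < m ^ K) ∧
  ∀ i, ((b i : ℤ) - (c i : ℤ)) % (m : ℤ) ^ K ∈ ({0, 1, (m : ℤ) ^ K - 1} : Set ℤ)

namespace Stmt14Aux

lemma modPow_succ {m : ℕ} (ω : Zm m) (n : ℕ) :
    modPow ω (n+1) = modPow ω n + (ω n).val * m ^ n := Finset.sum_range_succ _ _

lemma modPow_lt {m : ℕ} (hm : 0 < m) (ω : Zm m) (n : ℕ) : modPow ω n < m ^ n := by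
  induction n with
  | zero => simp [modPow]
  | succ n ih =>
    rw [modPow_succ]
    have h1 : (ω n).val ≤ m - 1 := Nat.le_sub_one_of_lt (ω n).isLt
    have h2 : (ω n).val * m ^ n ≤ (m-1) * m^n := Nat.mul_le_mul_right _ h1
    have key : m ^ n + (m - 1) * m ^ n = m ^ (n+1) := by
      have : (1 + (m-1)) * m ^ n = m * m ^ n := by
        rw [Nat.add_sub_cancel' hm]
      rw [pow_succ, mul_comm (m^n) m, ← this]; ring
    calc modPow ω n + (ω n).val * m ^ n < m ^ n + (m-1) * m^n :=
          Nat.add_lt_add_of_lt_of_le ih h2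
      _ = m ^ (n+1) := key

def digitize (m : ℕ) [NeZero m] (t : ℕ) : Zm m :=
  fun i => ⟨t / m ^ i % m, Nat.mod_lt _ (Nat.pos_of_ne_zero (NeZero.ne m))⟩

lemma mod_mul_pow {m : ℕ} (t n : ℕ) (hm : 0 < m) :
    t % (m ^ n * m) = t % m ^ n + t / m ^ n % m * m ^ n := by
  have hpos : 0 < m ^ n := Nat.pow_pos hm
  have h1 : t / m ^ n % m = t % (m ^ n * m) / m ^ n :=
    (Nat.mod_mul_right_div_self t (m ^ n) m).symm
  have h2 : t % (m ^ n * m) % m ^ n = t % m ^ n :=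
    Nat.mod_mod_of_dvd t ⟨m, rfl⟩
  rw [h1, ← h2]
  exact (Nat.mod_add_div' _ _).symm

lemma modPow_digitize {m : ℕ} [NeZero m] (t n : ℕ) :
    modPow (digitize m t) n = t % m ^ n := by
  have hm : 0 < m := Nat.pos_of_ne_zero (NeZero.ne m)
  induction n with
  | zero => simp [modPow, Nat.mod_one]
  | succ n ih =>
    rw [modPow_succ, ih, pow_succ, mod_mul_pow t n hm]
    rfl

end Stmt14Aux

namespace Stmt14Aux
variable {m s : ℕ}

lemma measurable_modPow (n : ℕ) : Measurable fun ω : Zm m => modPow ω n := by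
  unfold modPow
  exact Finset.measurable_sum _ fun i _ =>
    ((measurable_of_countable (fun v : Fin m => v.val * m ^ i)).comp (measurable_pi_apply i))

lemma measurable_phiEvent (hm : 0 < m) (f : Fin s → Zm m → Zm m) (hf : ∀ i, Lip1 (f i))
    (n : ℕ) (S : Set (Fin s → ℝ)) :
    MeasurableSet {ω : Zm m | phi f n ω ∈ S} := by
  haveI : NeZero m := ⟨Nat.pos_iff_ne_zero.mp hm⟩
  have hvec : Measurable fun ω : Zm m => (fun i => modPow (f i ω) n : Fin s → ℕ) := by
    apply measurable_pi_lambda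
    intro i
    have : (fun ω : Zm m => modPow (f i ω) n)
        = (fun t : ℕ => modPow (f i (digitize m t)) n) ∘ (fun ω => modPow ω n) := by
      funext ω
      have ht : modPow (digitize m (modPow ω n)) n = modPow ω n := by
        rw [modPow_digitize]
        exact Nat.mod_eq_of_lt (modPow_lt hm ω n)
      exact (hf i n _ _ ht.symm)
    rw [this]
    exact (measurable_of_countable _).comp (measurable_modPow n)
  have : {ω : Zm m | phi f n ω ∈ S}
      = (fun ω : Zm m => (fun i => modPow (f i ω) n : Fin s → ℕ)) ⁻¹'
        {v : Fin s → ℕ | (fun i => (v i : ℝ) / (m : ℝ) ^ n) ∈ S} := rfl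
  rw [this]
  exact hvec ((Set.to_countable _).measurableSet)

end Stmt14Aux

namespace Stmt14Aux

lemma Jcube_subset {m s : ℕ} (hm : 0 < m) {k r : ℕ} (a c : Fin s → ℕ)
    (h1 : ∀ i, a i * m ^ r ≤ c i) (h2 : ∀ i, c i + 1 ≤ (a i + 1) * m ^ r) :
    Jcube m (k + r) c ⊆ Jcube m k a := by
  intro x hx i
  obtain ⟨hl, hr'⟩ := hx i
  have hpk : (0:ℝ) < (m:ℝ) ^ k := by positivity
  have hpr : (0:ℝ) < (m:ℝ) ^ r := by positivity
  have hpkr : (0:ℝ) < (m:ℝ) ^ (k + r) := by positivity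
  have e1 : (a i : ℝ) / (m:ℝ) ^ k = ((a i : ℝ) * (m:ℝ) ^ r) / (m:ℝ) ^ (k + r) := by
    rw [pow_add]; field_simp
  have e2 : ((a i : ℝ) + 1) / (m:ℝ) ^ k = (((a i : ℝ) + 1) * (m:ℝ) ^ r) / (m:ℝ) ^ (k + r) := by
    rw [pow_add]; field_simp
  constructor
  · rw [e1]
    exact le_trans (div_le_div_of_nonneg_right (by exact_mod_cast h1 i) hpkr.le) hl
  · rw [e2]
    refine lt_of_lt_of_le hr' (div_le_div_of_nonneg_right ?_ hpkr.le)
    have := h2 i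
    exact_mod_cast this

lemma Jcube_index {m s k : ℕ} (hm : 0 < m) {a : Fin s → ℕ} {x : Fin s → ℝ}
    (hx : x ∈ Jcube m k a) (i : Fin s) : a i = ⌊x i * (m:ℝ) ^ k⌋₊ := by
  obtain ⟨hl, hr⟩ := hx i
  have hpk : (0:ℝ) < (m:ℝ) ^ k := by positivity
  have h1 : (a i : ℝ) ≤ x i * (m:ℝ) ^ k := by
    rw [div_le_iff₀ hpk] at hl; linarith
  have h2 : x i * (m:ℝ) ^ k < (a i : ℝ) + 1 := by
    rw [lt_div_iff₀ hpk] at hr; linarith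
  symm
  rw [Nat.floor_eq_iff (le_trans (Nat.cast_nonneg _) h1)]
  exact ⟨h1, by exact_mod_cast h2⟩

lemma Jcube_cover {m s k : ℕ} (hm : 0 < m) {x : Fin s → ℝ}
    (hx : ∀ i, 0 ≤ x i ∧ x i < 1) :
    (∀ i, (⌊x i * (m:ℝ) ^ k⌋₊) < m ^ k) ∧ x ∈ Jcube m k (fun i => ⌊x i * (m:ℝ) ^ k⌋₊) := by
  have hpk : (0:ℝ) < (m:ℝ) ^ k := by positivity
  constructor
  · intro i
    have hnn : 0 ≤ x i * (m:ℝ) ^ k := mul_nonneg (hx i).1 hpk.le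
    rw [Nat.floor_lt hnn]
    calc x i * (m:ℝ) ^ k < 1 * (m:ℝ) ^ k := by
          exact mul_lt_mul_of_pos_right (hx i).2 hpk
      _ = ((m ^ k : ℕ) : ℝ) := by push_cast; ring
  · intro i
    have hnn : 0 ≤ x i * (m:ℝ) ^ k := mul_nonneg (hx i).1 hpk.le
    constructor
    · rw [div_le_iff₀ hpk]
      exact Nat.floor_le hnn
    · rw [lt_div_iff₀ hpk]
      exact_mod_cast Nat.lt_floor_add_one (x i * (m:ℝ) ^ k)

lemma phi_mem_unit {m s : ℕ} (hm : 0 < m) (f : Fin s → Zm m → Zm m) (n : ℕ) (ω : Zm m) :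
    ∀ i, 0 ≤ phi f n ω i ∧ phi f n ω i < 1 := by
  intro i
  have hpn : (0:ℝ) < (m:ℝ) ^ n := by positivity
  unfold phi
  constructor
  · positivity
  · rw [div_lt_one hpn]
    exact_mod_cast modPow_lt hm (f i ω) n

end Stmt14Aux

namespace Stmt14Aux

lemma int_step {N B C : ℤ} (hN : 0 < N) (hC : 0 ≤ C) (hC2 : C < N)
    (hB1 : 1 ≤ B) (hB2 : B ≤ N - 2)
    (hx : (B - C) % N = 0 ∨ (B - C) % N = 1 ∨ (B - C) % N = N - 1) :
    B - 1 ≤ C ∧ C ≤ B + 1 := by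
  rcases le_or_gt C B with hle | hlt
  · have heq : (B - C) % N = B - C := Int.emod_eq_of_lt (by omega) (by omega)
    omega
  · have h1 : (B - C + N * 1) % N = (B - C) % N := by
      rw [Int.add_mul_emod_self_left]
    have h2 : (B - C + N * 1) % N = B - C + N * 1 := Int.emod_eq_of_lt (by omega) (by omega)
    omega

/-- The set of refinements of `a` whose neighborhoods stay in `J_k(a)`. -/
def MFin (m r : ℕ) {s : ℕ} (a : Fin s → ℕ) : Finset (Fin s → ℕ) :=
  Fintype.piFinset fun i => Finset.Icc (a i * m ^ r + 1) ((a i + 1) * m ^ r - 2)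

lemma mem_MFin {m r s : ℕ} {a b : Fin s → ℕ} :
    b ∈ MFin m r a ↔ ∀ i, a i * m ^ r + 1 ≤ b i ∧ b i ≤ (a i + 1) * m ^ r - 2 := by
  simp [MFin, Fintype.mem_piFinset, Finset.mem_Icc]

lemma MFin_card {m r s : ℕ} (hmr : 2 ≤ m ^ r) (a : Fin s → ℕ) :
    (MFin m r a).card = (m ^ r - 2) ^ s := by
  rw [MFin, Fintype.card_piFinset]
  have : ∀ i : Fin s, (Finset.Icc (a i * m ^ r + 1) ((a i + 1) * m ^ r - 2)).card
      = m ^ r - 2 := by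
    intro i
    rw [Nat.card_Icc]
    have hmul : (a i + 1) * m ^ r = a i * m ^ r + m ^ r := by ring
    omega
  simp only [this]
  simp [Finset.prod_const]

lemma MFin_disjoint {m r s : ℕ} (hmr : 2 ≤ m ^ r) {a a' : Fin s → ℕ} (hne : a ≠ a') :
    Disjoint (MFin m r a) (MFin m r a') := by
  rw [Finset.disjoint_left]
  intro b hb hb'
  apply hne
  funext i
  have h1 := (mem_MFin.mp hb) i
  have h2 := (mem_MFin.mp hb') i
  by_contra hne'
  rcases Nat.lt_or_ge (a i) (a' i) with hlt | hge
  · have : (a i + 1) * m ^ r ≤ a' i * m ^ r := Nat.mul_le_mul_right _ (by omega)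
    have hmul : (a i + 1) * m ^ r = a i * m ^ r + m ^ r := by ring
    omega
  · have hlt : a' i < a i := by omega
    have : (a' i + 1) * m ^ r ≤ a i * m ^ r := Nat.mul_le_mul_right _ (by omega)
    have hmul : (a' i + 1) * m ^ r = a' i * m ^ r + m ^ r := by ring
    omega

lemma neighb_bound {m k r s : ℕ} (hm : 0 < m) (hmr : 2 ≤ m ^ r) {a b c : Fin s → ℕ}
    (ha : ∀ i, a i < m ^ k) (hb : b ∈ MFin m r a) (hn : neighb m (k + r) b c) :
    ∀ i, a i * m ^ r ≤ c i ∧ c i + 1 ≤ (a i + 1) * m ^ r := by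
  intro i
  obtain ⟨hclt, hmod⟩ := hn
  have hbi := (mem_MFin.mp hb) i
  have hK : b i + 2 ≤ m ^ (k + r) := by
    have h1 : (a i + 1) * m ^ r ≤ m ^ (k + r) := by
      rw [pow_add]
      have hai := ha i
      exact Nat.mul_le_mul_right _ (by omega)
    have hmul : (a i + 1) * m ^ r = a i * m ^ r + m ^ r := by ring
    omega
  have hNpos : (0:ℤ) < (m:ℤ) ^ (k + r) := by positivity
  have hcast : ((m:ℤ)) ^ (k + r) = ((m ^ (k + r) : ℕ) : ℤ) := by push_cast; ring
  have hstep := int_step (N := (m:ℤ) ^ (k + r)) (B := (b i : ℤ)) (C := (c i : ℤ))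
    hNpos (by positivity)
    (by rw [hcast]; exact_mod_cast hclt i)
    (by exact_mod_cast Nat.one_le_iff_ne_zero.mpr (by omega))
    (by rw [hcast]; push_cast; omega)
    (by
      have := hmod i
      simpa [Set.mem_insert_iff] using this)
  have hmul : (a i + 1) * m ^ r = a i * m ^ r + m ^ r := by ring
  omega

end Stmt14Aux

namespace Stmt14Aux

lemma tendsto_ratio {m : ℕ} (hm : 1 < m) :
    Tendsto (fun r : ℕ => ((m ^ r - 2 : ℕ) : ENNReal) * (((m : ENNReal)) ^ r)⁻¹)
      atTop (nhds 1) := by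
  have hm0 : (m : ENNReal) ≠ 0 := by exact_mod_cast Nat.pos_iff_ne_zero.mp (by omega)
  have hmtop : (m : ENNReal) ≠ ⊤ := ENNReal.natCast_ne_top m
  have hz : Tendsto (fun r : ℕ => (2 : ENNReal) * (((m : ENNReal)) ^ r)⁻¹) atTop (nhds 0) := by
    have h1 : Tendsto (fun r : ℕ => (((m : ENNReal))⁻¹) ^ r) atTop (nhds 0) :=
      ENNReal.tendsto_pow_atTop_nhds_zero_of_lt_one
        (ENNReal.inv_lt_one.mpr (by exact_mod_cast hm))
    have h2 : Tendsto (fun r : ℕ => (((m : ENNReal)) ^ r)⁻¹) atTop (nhds 0) := by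
      simpa [ENNReal.inv_pow] using h1
    simpa using ENNReal.Tendsto.const_mul h2 (Or.inr ENNReal.ofNat_ne_top)
  have hmain : Tendsto (fun r : ℕ => (1 : ENNReal) - 2 * (((m : ENNReal)) ^ r)⁻¹)
      atTop (nhds 1) := by
    have := ENNReal.Tendsto.sub (tendsto_const_nhds (x := (1 : ENNReal))) hz
      (Or.inl ENNReal.one_ne_top)
    simpa using this
  apply hmain.congr'
  filter_upwards [eventually_ge_atTop 1] with r hr
  have hmr : 2 ≤ m ^ r := by
    calc 2 ≤ m := hm
      _ = m ^ 1 := (pow_one m).symm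
      _ ≤ m ^ r := Nat.pow_le_pow_right (by omega) hr
  have hpow0 : ((m : ENNReal)) ^ r ≠ 0 := pow_ne_zero _ hm0
  have hpowtop : ((m : ENNReal)) ^ r ≠ ⊤ := ENNReal.pow_ne_top hmtop
  have hcast : ((m ^ r - 2 : ℕ) : ENNReal) = ((m : ENNReal)) ^ r - 2 := by
    rw [ENNReal.natCast_sub]
    norm_num
  rw [hcast, ENNReal.sub_mul (fun _ _ => ENNReal.inv_ne_top.mpr hpow0),
    ENNReal.mul_inv_cancel hpow0 hpowtop]

lemma tendsto_main {m : ℕ} (hm : 1 < m) (k s C : ℕ) :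
    Tendsto (fun r : ℕ => ((C * (m ^ r - 2) ^ s : ℕ) : ENNReal) *
        (((m : ENNReal)) ^ ((k + r) * s))⁻¹) atTop
      (nhds ((C : ENNReal) * (((m : ENNReal)) ^ (k * s))⁻¹)) := by
  have hm0 : (m : ENNReal) ≠ 0 := by exact_mod_cast Nat.pos_iff_ne_zero.mp (by omega)
  have hmtop : (m : ENNReal) ≠ ⊤ := ENNReal.natCast_ne_top m
  have hks0 : ((m : ENNReal)) ^ (k * s) ≠ 0 := pow_ne_zero _ hm0
  have hkstop : ((m : ENNReal)) ^ (k * s) ≠ ⊤ := ENNReal.pow_ne_top hmtop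
  have heq : ∀ r : ℕ, ((C * (m ^ r - 2) ^ s : ℕ) : ENNReal) *
      (((m : ENNReal)) ^ ((k + r) * s))⁻¹
      = (C : ENNReal) * (((m : ENNReal)) ^ (k * s))⁻¹ *
        (((m ^ r - 2 : ℕ) : ENNReal) * (((m : ENNReal)) ^ r)⁻¹) ^ s := by
    intro r
    have h1 : ((m : ENNReal)) ^ ((k + r) * s)
        = ((m : ENNReal)) ^ (k * s) * (((m : ENNReal)) ^ r) ^ s := by
      rw [← pow_mul, ← pow_add, ← add_mul]
    have h2 : (((m : ENNReal)) ^ ((k + r) * s))⁻¹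
        = (((m : ENNReal)) ^ (k * s))⁻¹ * ((((m : ENNReal)) ^ r)⁻¹) ^ s := by
      rw [h1, ENNReal.mul_inv (Or.inl hks0) (Or.inl (ENNReal.pow_ne_top hmtop))]
      simp [ENNReal.inv_pow]
    rw [h2]
    push_cast
    ring
  simp only [heq]
  have hpow : Tendsto (fun r : ℕ =>
      (((m ^ r - 2 : ℕ) : ENNReal) * (((m : ENNReal)) ^ r)⁻¹) ^ s) atTop (nhds 1) := by
    simpa using ENNReal.Tendsto.pow (tendsto_ratio hm) (n := s)
  have := ENNReal.Tendsto.const_mul hpow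
    (Or.inr (by
      exact ENNReal.mul_ne_top (ENNReal.natCast_ne_top C) (ENNReal.inv_ne_top.mpr hks0)))
  simpa using this

end Stmt14Aux

open Stmt14Aux

/-- Sufficiency of neighborhood hitting: if for all `K, d, β` and every
`M ⊆ {0,…,m^K−1}^s` the conditional probability that `φₙ` hits
`⋃_{b∈M} ⋃_{c∈O_K(b)} J_K(c)` has liminf at least `Σ_{b∈M} m^{-Ks}`, then the
collection `f₁,…,f_s` is uniform with each suffix. -/
theorem stmt14 (m s : ℕ) (hm : 1 < m) (hs : 1 ≤ s)
    (μ : Measure (Zm m)) [IsProbabilityMeasure μ] (hμ : IsHaar μ)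
    (f : Fin s → Zm m → Zm m) (hf : ∀ i, Lip1 (f i))
    (h : ∀ (K d : ℕ) (β : ℕ), β < m ^ d →
      ∀ M : Set (Fin s → ℕ), (∀ b ∈ M, ∀ i, b i < m ^ K) →
        (M.ncard : ENNReal) * ((m : ENNReal) ^ (K * s))⁻¹ ≤
          Filter.liminf
            (fun n => ProbabilityTheory.cond μ (suffixEvent m d β)
              {ω | phi f n ω ∈ ⋃ b ∈ M, ⋃ c ∈ {c | neighb m K b c}, Jcube m K c})
            atTop) :
    UniformWithSuffix μ f := by
  intro k d a0 ha0 β hβ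
  have hm0 : 0 < m := by omega
  set E := suffixEvent m d β with hE
  have hEmeas : MeasurableSet E := by
    have : E = (fun ω : Zm m => modPow ω d) ⁻¹' {β} := rfl
    rw [this]
    exact measurable_modPow d (measurableSet_singleton β)
  have hEval : μ E = ((m : ENNReal) ^ d)⁻¹ := hμ d β hβ
  have hE0 : μ E ≠ 0 := by
    rw [hEval]
    exact ENNReal.inv_ne_zero.mpr (ENNReal.pow_ne_top (ENNReal.natCast_ne_top m))
  haveI : IsProbabilityMeasure (μ[|E]) := cond_isProbabilityMeasure hE0
  set L : ENNReal := ((m : ENNReal) ^ (k * s))⁻¹ with hLdef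
  -- the main lower bound, for unions of cubes
  have lower : ∀ F : Finset (Fin s → ℕ), (∀ a' ∈ F, ∀ i, a' i < m ^ k) →
      (F.card : ENNReal) * L ≤
        Filter.liminf
          (fun n => μ[|E] {ω | phi f n ω ∈ ⋃ a' ∈ (↑F : Set (Fin s → ℕ)), Jcube m k a'})
          atTop := by
    intro F hF
    refine le_of_tendsto (tendsto_main hm k s F.card) ?_
    filter_upwards [eventually_ge_atTop 1] with r hr
    have hmr : 2 ≤ m ^ r := by
      calc 2 ≤ m := hm
        _ = m ^ 1 := (pow_one m).symm
        _ ≤ m ^ r := Nat.pow_le_pow_right (by omega) hr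
    set M : Finset (Fin s → ℕ) := F.biUnion (MFin m r) with hM
    have hMcard : M.card = F.card * (m ^ r - 2) ^ s := by
      rw [hM, Finset.card_biUnion (fun a' _ a'' _ hne => MFin_disjoint hmr hne)]
      simp [MFin_card hmr]
    have hMbound : ∀ b ∈ (↑M : Set (Fin s → ℕ)), ∀ i, b i < m ^ (k + r) := by
      intro b hb i
      obtain ⟨a', ha'F, hbMF⟩ := Finset.mem_biUnion.mp hb
      have hbi := (mem_MFin.mp hbMF) i
      have h1 : (a' i + 1) * m ^ r ≤ m ^ (k + r) := by
        rw [pow_add]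
        have hai := hF a' ha'F i
        exact Nat.mul_le_mul_right _ (by omega)
      have hmul : (a' i + 1) * m ^ r = a' i * m ^ r + m ^ r := by ring
      omega
    have hkey := h (k + r) d β hβ (↑M) hMbound
    rw [Set.ncard_coe_finset, hMcard] at hkey
    refine le_trans hkey ?_
    refine Filter.liminf_le_liminf (Filter.Eventually.of_forall fun n => ?_)
    refine measure_mono fun ω hω => ?_
    simp only [Set.mem_setOf_eq, Set.mem_iUnion, exists_prop] at hω ⊢
    obtain ⟨b, hb, c, hc, hmemJ⟩ := hω
    obtain ⟨a', ha'F, hbMF⟩ := Finset.mem_biUnion.mp hb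
    refine ⟨a', ha'F, ?_⟩
    have hbd := neighb_bound hm0 hmr (hF a' ha'F) hbMF hc
    exact Jcube_subset hm0 a' c (fun i => (hbd i).1) (fun i => (hbd i).2) hmemJ
  -- the index set of all cubes
  set A : Finset (Fin s → ℕ) := Fintype.piFinset (fun _ : Fin s => Finset.range (m ^ k))
    with hA
  have ha0A : a0 ∈ A := by
    simp only [hA, Fintype.mem_piFinset, Finset.mem_range]
    exact ha0
  have hAmem : ∀ a' ∈ A, ∀ i, a' i < m ^ k := by
    intro a' ha' i
    have := Fintype.mem_piFinset.mp ha' i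
    simpa using this
  have hAcard : A.card = m ^ (k * s) := by
    rw [hA, Fintype.card_piFinset]
    simp [Finset.card_range, pow_mul]
  set S : ℕ → Set (Zm m) := fun n => {ω | phi f n ω ∈ Jcube m k a0} with hSdef
  set R : ℕ → Set (Zm m) :=
    fun n => {ω | phi f n ω ∈ ⋃ a' ∈ (↑(A.erase a0) : Set (Fin s → ℕ)), Jcube m k a'}
    with hRdef
  have hRmeas : ∀ n, MeasurableSet (R n) := fun n =>
    measurable_phiEvent hm0 f hf n _
  have hcompl : ∀ n, S n = (R n)ᶜ := by
    intro n
    ext ω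
    simp only [hSdef, hRdef, Set.mem_compl_iff, Set.mem_setOf_eq, Set.mem_iUnion,
      exists_prop, not_exists, not_and, Finset.mem_coe]
    constructor
    · intro hJ a' ha' hJ'
      have : a' = a0 := by
        funext i
        rw [Jcube_index hm0 hJ' i, ← Jcube_index hm0 hJ i]
      exact (Finset.mem_erase.mp ha').1 this
    · intro hnot
      obtain ⟨hbound, hcov⟩ := Jcube_cover (k := k) hm0 (phi_mem_unit hm0 f n ω)
      set astar : Fin s → ℕ := fun i => ⌊phi f n ω i * (m : ℝ) ^ k⌋₊ with hastar
      by_cases heq : astar = a0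
      · rwa [heq] at hcov
      · exfalso
        refine hnot astar (Finset.mem_erase.mpr ⟨heq, ?_⟩) hcov
        simp only [hA, Fintype.mem_piFinset, Finset.mem_range]
        exact hbound
  have lower1 : L ≤ Filter.liminf (fun n => μ[|E] (S n)) atTop := by
    have hl := lower {a0} (by
      intro a' ha' i
      rw [Finset.mem_singleton.mp ha']
      exact ha0 i)
    simpa [hSdef] using hl
  have lower2 : 1 - L ≤ Filter.liminf (fun n => μ[|E] (R n)) atTop := by
    have hcard : (A.erase a0).card = m ^ (k * s) - 1 := by
      rw [Finset.card_erase_of_mem ha0A, hAcard]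
    have hl := lower (A.erase a0) (fun a' ha' => hAmem a' (Finset.mem_erase.mp ha').2)
    rw [hcard] at hl
    refine le_trans (le_of_eq ?_) hl
    have hX0 : ((m : ENNReal) ^ (k * s)) ≠ 0 :=
      pow_ne_zero _ (by exact_mod_cast Nat.pos_iff_ne_zero.mp hm0)
    have hXtop : ((m : ENNReal) ^ (k * s)) ≠ ⊤ := ENNReal.pow_ne_top (ENNReal.natCast_ne_top m)
    have hcast : ((m ^ (k * s) - 1 : ℕ) : ENNReal) = (m : ENNReal) ^ (k * s) - 1 := by
      rw [ENNReal.natCast_sub]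
      norm_num
    rw [hcast, ENNReal.sub_mul (fun _ _ => ENNReal.inv_ne_top.mpr hX0), hLdef,
      ENNReal.mul_inv_cancel hX0 hXtop, one_mul]
  have upper : Filter.limsup (fun n => μ[|E] (S n)) atTop ≤ L := by
    have hfun : (fun n => μ[|E] (S n)) = fun n => 1 - μ[|E] (R n) := by
      funext n
      rw [hcompl n, prob_compl_eq_one_sub (hRmeas n)]
    rw [hfun, ENNReal.limsup_const_sub atTop _ ENNReal.one_ne_top]
    calc 1 - Filter.liminf (fun n => μ[|E] (R n)) atTop
        ≤ 1 - (1 - L) := tsub_le_tsub_left lower2 1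
      _ = L := ENNReal.sub_sub_cancel ENNReal.one_ne_top (by
          rw [hLdef]
          refine ENNReal.inv_le_one.mpr ?_
          calc (1 : ENNReal) = 1 ^ (k * s) := (one_pow _).symm
            _ ≤ (m : ENNReal) ^ (k * s) :=
                pow_le_pow_left₀ (by norm_num) (by exact_mod_cast hm.le) _)
  exact tendsto_of_le_liminf_of_limsup_le lower1 upper
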